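/- Let G̃ be the pattern matching graph for text T of length n and pattern P of length w: vertices {0,…,n} × {0,…,w}, horizontal edges (i−1,j)→(i,j) of cost 1 except cost 0 when j = 0, vertical edges (i,j−1)→(i,j) of cost 1, and diagonal edges (i−1,j−1)→(i,j) of cost [T_i ≠ P_j]. Then for every t ∈ {1,…,n}, the minimum cost of a path from (0,0) to (t,w) equals min_{1 ≤ i ≤ t+1} edit(T[i..t], P). -/

import Mathlib

set_option linter.unusedSectionVars false
set_option linter.unusedVariables false

variable {α : Type*}

/-- Unit-cost Levenshtein distance (replacement for the removed Mathlib
`unitLevenshtein`, via its characterising recursion). -/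
def unitLevenshtein [DecidableEq α] : List α → List α → ℕ
  | [], ys => ys.length
  | x :: xs, [] => (x :: xs).length
  | x :: xs, y :: ys =>
      min (1 + unitLevenshtein xs (y :: ys))
        (min (1 + unitLevenshtein (x :: xs) ys)
          ((if x = y then 0 else 1) + unitLevenshtein xs ys))

/-- Levenshtein edit distance with unit costs. -/
def edit [DecidableEq α] (u v : List α) : ℕ :=
  unitLevenshtein u v

/-- `GridPath hcost dcost p q c` : there is a path from `p` to `q` in the grid
graph of total cost `c`, where the horizontal edge (i,j) → (i+1,j) costs
`hcost (i,j)`, each vertical edge (i,j) → (i,j+1) costs 1, and the diagonal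
edge (i,j) → (i+1,j+1) costs `dcost (i,j)`. -/
inductive GridPath (hcost dcost : ℕ × ℕ → ℕ) : ℕ × ℕ → ℕ × ℕ → ℕ → Prop
  | nil (p : ℕ × ℕ) : GridPath hcost dcost p p 0
  | horiz {q : ℕ × ℕ} {c : ℕ} (i j : ℕ) :
      GridPath hcost dcost (i + 1, j) q c → GridPath hcost dcost (i, j) q (hcost (i, j) + c)
  | vert {q : ℕ × ℕ} {c : ℕ} (i j : ℕ) :
      GridPath hcost dcost (i, j + 1) q c → GridPath hcost dcost (i, j) q (1 + c)
  | diag {q : ℕ × ℕ} {c : ℕ} (i j : ℕ) :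
      GridPath hcost dcost (i + 1, j + 1) q c → GridPath hcost dcost (i, j) q (dcost (i, j) + c)

attribute [simp] unitLevenshtein.eq_1 unitLevenshtein.eq_2

lemma lev_nil_right [DecidableEq α] (xs : List α) :
    unitLevenshtein xs [] = xs.length := by
  cases xs <;> simp

lemma lev_nil_left [DecidableEq α] (ys : List α) :
    unitLevenshtein [] ys = ys.length := by
  cases ys <;> simp

lemma lev_del [DecidableEq α] (x : α) (xs ys : List α) :
    unitLevenshtein (x :: xs) ys ≤
      1 + unitLevenshtein xs ys := by
  cases ys with
  | nil => simp [lev_nil_right]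
  | cons y ys =>
    rw [unitLevenshtein.eq_3]
    exact le_trans (min_le_left _ _) (by simp)

lemma lev_ins [DecidableEq α] (xs : List α) (y : α) (ys : List α) :
    unitLevenshtein xs (y :: ys) ≤
      1 + unitLevenshtein xs ys := by
  cases xs with
  | nil => simp
  | cons x xs =>
    rw [unitLevenshtein.eq_3]
    exact le_trans (min_le_right _ _) (le_trans (min_le_left _ _) (by simp))

lemma lev_sub [DecidableEq α] (x : α) (xs : List α) (y : α) (ys : List α) :
    unitLevenshtein (x :: xs) (y :: ys) ≤
      (if x = y then 0 else 1) + unitLevenshtein xs ys := by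
  rw [unitLevenshtein.eq_3]
  exact le_trans (min_le_right _ _) (le_trans (min_le_right _ _) (by simp))

lemma take_drop_cons [Inhabited α] (T : List α) {a t : ℕ} (h1 : a < t) (h2 : t ≤ T.length) :
    (T.take t).drop a = T.getI a :: (T.take t).drop (a + 1) := by
  have hl : a < (T.take t).length := by simp; omega
  rw [List.drop_eq_getElem_cons hl]
  congr 1
  rw [List.getElem_take]
  exact (List.getI_eq_getElem _ (by omega)).symm

lemma drop_cons [Inhabited α] (P : List α) {b : ℕ} (h : b < P.length) :
    P.drop b = P.getI b :: P.drop (b + 1) := by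
  rw [List.drop_eq_getElem_cons h, List.getI_eq_getElem _ h]

section EdSection
variable [DecidableEq α] [Inhabited α]

/-- Cost of horizontal edges in the pattern matching graph. -/
def Hc : ℕ × ℕ → ℕ := fun p => if p.2 = 0 then 0 else 1

/-- Cost of diagonal edges. -/
def Dc (T P : List α) : ℕ × ℕ → ℕ :=
  fun p => if T.getI p.1 = P.getI p.2 then 0 else 1

/-- Edit distance between `T[a+1..t]` and `P[b+1..]`. -/
def Ed (T P : List α) (t a b : ℕ) : ℕ :=
  unitLevenshtein ((T.take t).drop a) (P.drop b)

lemma Ed_right (T P : List α) {t : ℕ} (ht : t ≤ T.length) (a : ℕ) :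
    Ed T P t a P.length = t - a := by
  simp [Ed, lev_nil_right]; omega

lemma Ed_left (T P : List α) {t : ℕ} (ht : t ≤ T.length) (b : ℕ) :
    Ed T P t t b = P.length - b := by
  have h1 : (T.take t).drop t = [] := List.drop_eq_nil_of_le (by simp)
  simp [Ed, h1, lev_nil_left]

lemma Ed_ins (T P : List α) (t a : ℕ) {b : ℕ} (hb : b < P.length) :
    Ed T P t a b ≤ 1 + Ed T P t a (b + 1) := by
  rw [Ed, Ed, drop_cons P hb]
  exact lev_ins _ _ _

lemma Ed_del (T P : List α) {t a : ℕ} (ht : t ≤ T.length) (ha : a < t) (b : ℕ) :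
    Ed T P t a b ≤ 1 + Ed T P t (a + 1) b := by
  rw [Ed, Ed, take_drop_cons T ha ht]
  exact lev_del _ _ _

lemma Ed_sub (T P : List α) {t a b : ℕ} (ht : t ≤ T.length) (ha : a < t)
    (hb : b < P.length) :
    Ed T P t a b ≤ (if T.getI a = P.getI b then 0 else 1) + Ed T P t (a + 1) (b + 1) := by
  rw [Ed, Ed, take_drop_cons T ha ht, drop_cons P hb]
  exact lev_sub _ _ _ _

lemma Ed_rec (T P : List α) {t a b : ℕ} (ht : t ≤ T.length) (ha : a < t)
    (hb : b < P.length) :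
    Ed T P t a b = min (1 + Ed T P t (a + 1) b)
      (min (1 + Ed T P t a (b + 1))
        ((if T.getI a = P.getI b then 0 else 1) + Ed T P t (a + 1) (b + 1))) := by
  simp only [Ed]
  rw [take_drop_cons T ha ht, drop_cons P hb, unitLevenshtein.eq_3]

lemma lb1 (T P : List α) {t w : ℕ} (ht : t ≤ T.length) (hw : P.length = w) :
    ∀ {p q : ℕ × ℕ} {c : ℕ}, GridPath Hc (Dc T P) p q c → q = (t, w) → 1 ≤ p.2 →
      p.1 ≤ t ∧ p.2 ≤ w ∧ Ed T P t p.1 p.2 ≤ c := by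
  intro p q c h
  induction h with
  | nil p =>
    rintro rfl hj
    refine ⟨le_rfl, le_rfl, ?_⟩
    have h1 : (T.take t).drop t = [] := List.drop_eq_nil_of_le (by simp)
    have h2 : P.drop w = [] := List.drop_eq_nil_of_le (by omega)
    simp [Ed, h1, h2]
  | horiz i j h ih =>
    rintro rfl hj
    have hj' : 1 ≤ j := hj
    obtain ⟨h1, h2, h3⟩ := ih rfl hj'
    dsimp only at h1 h2 h3 ⊢
    refine ⟨by omega, h2, ?_⟩
    have hH : Hc (i, j) = 1 := by simp [Hc]; omega
    rw [hH]
    have := Ed_del T P (t := t) (a := i) ht (by omega) j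
    omega
  | vert i j h ih =>
    rintro rfl hj
    obtain ⟨h1, h2, h3⟩ := ih rfl (by norm_num)
    dsimp only at h1 h2 h3 ⊢
    refine ⟨h1, by omega, ?_⟩
    have := Ed_ins T P t i (b := j) (by omega)
    omega
  | diag i j h ih =>
    rintro rfl hj
    obtain ⟨h1, h2, h3⟩ := ih rfl (by norm_num)
    dsimp only at h1 h2 h3 ⊢
    refine ⟨by omega, by omega, ?_⟩
    have hd : Dc T P (i, j) = if T.getI i = P.getI j then 0 else 1 := rfl
    rw [hd]
    have := Ed_sub T P (t := t) (a := i) (b := j) ht (by omega) (by omega)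
    omega

lemma lb0 (T P : List α) {t w : ℕ} (ht : t ≤ T.length) (hw : P.length = w) :
    ∀ {p q : ℕ × ℕ} {c : ℕ}, GridPath Hc (Dc T P) p q c → q = (t, w) → p.2 = 0 →
      ∃ i, p.1 ≤ i ∧ i ≤ t ∧ Ed T P t i 0 ≤ c := by
  intro p q c h
  induction h with
  | nil p =>
    rintro rfl hj
    have hw0 : w = 0 := hj
    refine ⟨t, le_rfl, le_rfl, ?_⟩
    have h1 : (T.take t).drop t = [] := List.drop_eq_nil_of_le (by simp)
    have h2 : P.drop 0 = [] := by
      rw [List.drop_zero]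
      exact List.length_eq_zero_iff.mp (by omega)
    simp [Ed, h1, h2]
  | horiz i j h ih =>
    rintro rfl hj
    have hj' : j = 0 := hj
    subst hj'
    obtain ⟨i', h1, h2, h3⟩ := ih rfl rfl
    dsimp only at h1 h2 h3 ⊢
    refine ⟨i', by omega, h2, ?_⟩
    have hH : Hc (i, 0) = 0 := by simp [Hc]
    omega
  | vert i j h ih =>
    rintro rfl hj
    have hj' : j = 0 := hj
    subst hj'
    obtain ⟨h1, h2, h3⟩ := lb1 T P ht hw h rfl (by norm_num)
    dsimp only at h1 h2 h3 ⊢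
    refine ⟨i, le_rfl, h1, ?_⟩
    have := Ed_ins T P t i (b := 0) (by omega)
    omega
  | diag i j h ih =>
    rintro rfl hj
    have hj' : j = 0 := hj
    subst hj'
    obtain ⟨h1, h2, h3⟩ := lb1 T P ht hw h rfl (by norm_num)
    dsimp only at h1 h2 h3 ⊢
    refine ⟨i, le_rfl, by omega, ?_⟩
    have hd : Dc T P (i, 0) = if T.getI i = P.getI 0 then 0 else 1 := rfl
    rw [hd]
    have := Ed_sub T P (t := t) (a := i) (b := 0) ht (by omega) (by omega)
    omega

lemma ub1 (T P : List α) {t w : ℕ} (ht : t ≤ T.length) (hw : P.length = w) :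
    ∀ N a b, t - a + (w - b) ≤ N → a ≤ t → 1 ≤ b → b ≤ w →
      GridPath Hc (Dc T P) (a, b) (t, w) (Ed T P t a b) := by
  intro N
  induction N with
  | zero =>
    intro a b hN ha hb1 hb2
    have e : Ed T P t a b = 0 := by
      have h1 : (T.take t).drop a = [] := List.drop_eq_nil_of_le (by simp; omega)
      have h2 : P.drop b = [] := List.drop_eq_nil_of_le (by omega)
      simp [Ed, h1, h2]
    have hat : a = t := by omega
    have hbw : b = w := by omega
    rw [e, hat, hbw]
    exact .nil _
  | succ N ih =>
    intro a b hN ha hb1 hb2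
    by_cases hat : a = t
    · by_cases hbw : b = w
      · have e : Ed T P t a b = 0 := by rw [hat, Ed_left T P ht]; omega
        rw [e, hat, hbw]
        exact .nil _
      · have e : Ed T P t a b = 1 + Ed T P t a (b + 1) := by
          rw [hat, Ed_left T P ht, Ed_left T P ht]; omega
        rw [e]
        exact .vert a b (ih a (b + 1) (by omega) ha (by omega) (by omega))
    · have ha' : a < t := by omega
      by_cases hbw : b = w
      · have e : Ed T P t a b = Hc (a, b) + Ed T P t (a + 1) b := by
          have hH : Hc (a, b) = 1 := by simp [Hc]; omega
          have hbl : b = P.length := by omega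
          rw [hH, hbl, Ed_right T P ht, Ed_right T P ht]; omega
        rw [e]
        exact .horiz a b (ih (a + 1) b (by omega) (by omega) hb1 hb2)
      · have hbP : b < P.length := by omega
        have hrec := Ed_rec T P ht ha' hbP
        rcases min_choice (1 + Ed T P t (a + 1) b)
            (min (1 + Ed T P t a (b + 1))
              ((if T.getI a = P.getI b then 0 else 1) + Ed T P t (a + 1) (b + 1))) with h | h
        · have e : Ed T P t a b = Hc (a, b) + Ed T P t (a + 1) b := by
            have hH : Hc (a, b) = 1 := by simp [Hc]; omega
            rw [hrec, h, hH]
          rw [e]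
          exact .horiz a b (ih (a + 1) b (by omega) (by omega) hb1 hb2)
        · rcases min_choice (1 + Ed T P t a (b + 1))
              ((if T.getI a = P.getI b then 0 else 1) + Ed T P t (a + 1) (b + 1)) with h2 | h2
          · have e : Ed T P t a b = 1 + Ed T P t a (b + 1) := by rw [hrec, h, h2]
            rw [e]
            exact .vert a b (ih a (b + 1) (by omega) (by omega) (by omega) (by omega))
          · have e : Ed T P t a b = Dc T P (a, b) + Ed T P t (a + 1) (b + 1) := by
              rw [hrec, h, h2]; rfl
            rw [e]
            exact .diag a b (ih (a + 1) (b + 1) (by omega) (by omega) (by omega) (by omega))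

lemma ub0 (T P : List α) {t w : ℕ} (ht : t ≤ T.length) (hw : P.length = w)
    (hw1 : 1 ≤ w) (a : ℕ) (ha : a ≤ t)
    (hmin : ∀ j, j ≤ t → Ed T P t a 0 ≤ Ed T P t j 0) :
    GridPath Hc (Dc T P) (a, 0) (t, w) (Ed T P t a 0) := by
  by_cases hat : a = t
  · have e : Ed T P t a 0 = 1 + Ed T P t a 1 := by
      rw [hat, Ed_left T P ht, Ed_left T P ht]; omega
    rw [e]
    exact .vert a 0 (ub1 T P ht hw (t + w) a 1 (by omega) ha le_rfl hw1)
  · have ha' : a < t := by omega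
    have hrec := Ed_rec T P (b := 0) ht ha' (by omega)
    rcases min_choice (1 + Ed T P t (a + 1) 0)
        (min (1 + Ed T P t a (0 + 1))
          ((if T.getI a = P.getI 0 then 0 else 1) + Ed T P t (a + 1) (0 + 1))) with h | h
    · exfalso
      have e : Ed T P t a 0 = 1 + Ed T P t (a + 1) 0 := hrec.trans h
      have := hmin (a + 1) (by omega)
      omega
    · rw [hrec, h]
      rcases min_choice (1 + Ed T P t a (0 + 1))
          ((if T.getI a = P.getI 0 then 0 else 1) + Ed T P t (a + 1) (0 + 1)) with h2 | h2 <;>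
        rw [h2] <;> simp only [Nat.zero_add]
      · exact .vert a 0 (ub1 T P ht hw (t + w) a 1 (by omega) (by omega) le_rfl hw1)
      · have hd : (if T.getI a = P.getI 0 then 0 else 1) = Dc T P (a, 0) := rfl
        rw [hd]
        exact .diag a 0 (ub1 T P ht hw (t + w) (a + 1) 1 (by omega) (by omega) le_rfl hw1)

lemma free_prefix (T P : List α) :
    ∀ a {q : ℕ × ℕ} {c : ℕ}, GridPath Hc (Dc T P) (a, 0) q c →
      GridPath Hc (Dc T P) (0, 0) q c := by
  intro a
  induction a with
  | zero => exact fun h => h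
  | succ a ih =>
    intro q c h
    have h' := GridPath.horiz (hcost := Hc) (dcost := Dc T P) a 0 h
    have e : Hc (a, 0) + c = c := by simp [Hc]
    rw [e] at h'
    exact ih h'

end EdSection

lemma free_prefix2 [DecidableEq α] [Inhabited α] (T P : List α) :
    ∀ a {q : ℕ × ℕ} {c : ℕ}, GridPath Hc (Dc T P) (a, 0) q c →
      GridPath Hc (Dc T P) (0, 0) q c := by
  intro a
  induction a with
  | zero => exact fun h => h
  | succ a ih =>
    intro q c h
    have h' := GridPath.horiz (hcost := Hc) (dcost := Dc T P) a 0 h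
    have e : Hc (a, 0) + c = c := by simp [Hc]
    rw [e] at h'
    exact ih h'

/-- In the pattern matching graph (horizontal edges on the bottom row j = 0
are free), the minimum cost of a path from (0,0) to (t,w) equals
min_{1 ≤ i ≤ t+1} edit(T[i..t], P). -/
theorem stmt_12 [DecidableEq α] [Inhabited α] (T P : List α) (n w : ℕ)
    (hT : T.length = n) (hP : P.length = w) (t : ℕ) (ht1 : 1 ≤ t) (ht2 : t ≤ n) :
    IsLeast
      {c : ℕ | GridPath (fun p => if p.2 = 0 then 0 else 1)
        (fun p => if T.getI p.1 = P.getI p.2 then 0 else 1)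
        (0, 0) (t, w) c}
      (sInf {d : ℕ | ∃ i, 1 ≤ i ∧ i ≤ t + 1 ∧ d = edit ((T.take t).drop (i - 1)) P}) := by
  subst hT hP
  have ht : t ≤ T.length := ht2
  have hED : ∀ a : ℕ, Ed T P t a 0 = edit ((T.take t).drop a) P := by
    intro a; rw [Ed, List.drop_zero]; rfl
  set S := {d : ℕ | ∃ i, 1 ≤ i ∧ i ≤ t + 1 ∧ d = edit ((T.take t).drop (i - 1)) P} with hS
  have hmem : ∀ j : ℕ, j ≤ t → edit ((T.take t).drop j) P ∈ S := by
    intro j hj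
    exact ⟨j + 1, by omega, by omega, by simp⟩
  rcases Nat.eq_zero_or_pos P.length with hw0 | hw1
  · -- w = 0
    have hPnil : P = [] := List.length_eq_zero_iff.mp hw0
    have h0 : (0 : ℕ) ∈ S := by
      refine ⟨t + 1, by omega, le_rfl, ?_⟩
      have : (T.take t).drop ((t + 1) - 1) = [] := by
        apply List.drop_eq_nil_of_le; simp
      rw [this, hPnil]
      simp [edit]
    have hsInf : sInf S = 0 := Nat.sInf_eq_zero.mpr (Or.inl h0)
    constructor
    · show GridPath _ _ (0, 0) (t, P.length) (sInf S)
      rw [hsInf, hw0]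
      exact free_prefix2 T P t (GridPath.nil (t, 0))
    · intro c hc
      rw [hsInf]
      exact Nat.zero_le c
  · -- w ≥ 1
    have hne : S.Nonempty := ⟨edit ((T.take t).drop 0) P, hmem 0 (by omega)⟩
    obtain ⟨i, hi1, hi2, hval⟩ := Nat.sInf_mem hne
    have hvalE : sInf S = Ed T P t (i - 1) 0 := by rw [hval, hED]
    have hmin : ∀ j, j ≤ t → Ed T P t (i - 1) 0 ≤ Ed T P t j 0 := by
      intro j hj
      rw [← hvalE, hED]
      exact Nat.sInf_le (hmem j hj)
    constructor
    · show GridPath _ _ (0, 0) (t, P.length) (sInf S)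
      rw [hvalE]
      exact free_prefix2 T P (i - 1)
        (ub0 T P ht rfl hw1 (i - 1) (by omega) hmin)
    · intro c hc
      obtain ⟨i', h1, h2, h3⟩ := lb0 T P ht rfl hc rfl rfl
      calc sInf S ≤ Ed T P t i' 0 := Nat.sInf_le (by rw [hED]; exact hmem i' h2)
        _ ≤ c := h3
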